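/- arXiv:2109.04221 — 2 statements merged into one kernel-verified Lean document; each statement's English description precedes it below -/
import Mathlib

section
/- Let P and Q be finite sets in ℝ × ℝ such that in each set, for any two distinct elements, one has strictly smaller first coordinate and strictly larger second coordinate than the other (strict 2D skyline sets, sorted by weight with strictly decreasing cost). Index P = {p₁,...,p_m} by increasing weight and Q = {q₁,...,q_n} by increasing weight. Then for any i, j, the sum p_i + q_j is not dominated by any sum p_k + q_l with k < i and l < j, nor by any p_k + q_l with k > i and l > j. -/
def Dom (p q : ℝ × ℝ) : Prop := p.1 ≤ q.1 ∧ p.2 ≤ q.2 ∧ p ≠ q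

/-- Side-path irrelevance: `p i + q j` cannot be dominated by sums with both
indices strictly smaller, nor by sums with both indices strictly larger. -/
theorem side_path_irrelevant (m n : ℕ) (p : Fin m → ℝ × ℝ) (q : Fin n → ℝ × ℝ)
    (hpw : StrictMono fun i => (p i).1) (hpc : StrictAnti fun i => (p i).2)
    (hqw : StrictMono fun j => (q j).1) (hqc : StrictAnti fun j => (q j).2)
    (i : Fin m) (j : Fin n) :
    (∀ k : Fin m, ∀ l : Fin n, k < i → l < j → ¬ Dom (p k + q l) (p i + q j)) ∧
    (∀ k : Fin m, ∀ l : Fin n, i < k → j < l → ¬ Dom (p k + q l) (p i + q j)) := by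
  constructor
  · intro k l hk hl ⟨_, h2, _⟩
    have a := hpc hk
    have b := hqc hl
    simp only [Prod.snd_add] at h2
    simp only at a b
    linarith
  · intro k l hk hl ⟨h1, _, _⟩
    have a := hpw hk
    have b := hqw hl
    simp only [Prod.fst_add] at h1
    simp only at a b
    linarith
end

section
/- Let v₁,...,v_k ∈ ℝⁿ be distinct points, none equal to v_{k+1} ∈ ℝⁿ, and suppose (v_{k+1})_1 ≥ (v_j)_1 for all j (the new point has the largest first coordinate). For each coordinate i ∈ {2,...,n} let D_i = {j : (v_j)_i > (v_{k+1})_i}. If ∑_{i=2}^{n} |D_i| < k, then some v_j dominates v_{k+1}. -/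
def DomN {n : ℕ} (x y : Fin n → ℝ) : Prop := (∀ i, x i ≤ y i) ∧ x ≠ y

open Finset in
/-- Union-based pruning: if fewer than `k` existing points beat the new
maximal-weight point on at least one cost coordinate, the new point is
dominated. Coordinate `0` is the weight; coordinates `≠ 0` are the costs. -/
theorem union_pruning (n k : ℕ)
    (v : Fin k → Fin (n + 1) → ℝ) (vNew : Fin (n + 1) → ℝ)
    (hinj : Function.Injective v) (hne : ∀ j, v j ≠ vNew)
    (hwmax : ∀ j, v j 0 ≤ vNew 0)
    (hsum : ∑ i ∈ (univ : Finset (Fin (n + 1))).erase 0,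
        ((univ : Finset (Fin k)).filter fun j => vNew i < v j i).card < k) :
    ∃ j : Fin k, DomN (v j) vNew := by
  set B := ((univ : Finset (Fin (n + 1))).erase 0).biUnion
      (fun i => (univ : Finset (Fin k)).filter fun j => vNew i < v j i) with hB
  have hcard : B.card < k := lt_of_le_of_lt (card_biUnion_le) hsum
  have : B ≠ univ := by
    intro h
    rw [h, card_univ, Fintype.card_fin] at hcard
    exact lt_irrefl _ hcard
  obtain ⟨j, hj⟩ : ∃ j : Fin k, j ∉ B := by
    by_contra hcon
    push_neg at hcon
    exact this (eq_univ_of_forall hcon)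
  refine ⟨j, ?_, hne j⟩
  intro i
  by_cases hi : i = 0
  · subst hi; exact hwmax j
  · by_contra hlt
    push_neg at hlt
    exact hj (mem_biUnion.2 ⟨i, mem_erase.2 ⟨hi, mem_univ i⟩,
      mem_filter.2 ⟨mem_univ j, hlt⟩⟩)
end
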